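/- Let (𝒞, 𝒞^⊥¹) be a cotorsion pair on 𝓑. Then every object X admits a commutative diagram of short exact sequences: 0→X→T₀→C₀→0 with T₀ ∈ 𝒞^⊥¹ and C₀ ∈ 𝒞; 0→U₀→u₀→P₀→C₀→0 with P₀ projective (so U₀ ∈ Ω𝒞); an epimorphism f₀ : U₀ → X with kernel Y₀, fitting into short exact sequences 0→Y₀→g₀→U₀→f₀→X→0 and 0→Y₀→P₀→T₀→0 compatible with the above rows; and moreover f₀ is a right Ω𝒞-approximation of X, i.e. every morphism U→X with U ∈ Ω𝒞 factors through f₀. -/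

import Mathlib

open CategoryTheory Category Limits ZeroObject

universe v u

namespace CotorsionPaper

variable {B : Type u} [Category.{v} B] [Abelian B]

/-- `f, g` form a short exact sequence `0 → X → Y → Z → 0`. -/
def IsSES {X Y Z : B} (f : X ⟶ Y) (g : Y ⟶ Z) : Prop :=
  ∃ w : f ≫ g = 0, (ShortComplex.mk f g w).ShortExact

/-- `Ext¹(X, Y) = 0`: every short exact sequence `0 → Y → E → X → 0` splits. -/
def Ext1Zero (X Y : B) : Prop :=
  ∀ ⦃E : B⦄ (i : Y ⟶ E) (p : E ⟶ X), IsSES i p → ∃ s : X ⟶ E, s ≫ p = 𝟙 X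

/-- `Ext²(X, Y) = 0`, via dimension shifting: `Ext¹(K, Y) = 0` for any syzygy `K` of `X`. -/
def Ext2Zero (X Y : B) : Prop :=
  ∀ ⦃K P : B⦄ (i : K ⟶ P) (p : P ⟶ X), Projective P → IsSES i p → Ext1Zero K Y

/-- A (strictly) full additive subcategory: closed under isomorphisms,
contains a zero object and is closed under finite direct sums. -/
structure AddSubcat (S : Set B) : Prop where
  zero_mem : (0 : B) ∈ S
  iso_closed : ∀ ⦃X Y : B⦄, (X ≅ Y) → X ∈ S → Y ∈ S
  sum_closed : ∀ ⦃X Y : B⦄, X ∈ S → Y ∈ S → (X ⊞ Y) ∈ S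

/-- `S` is closed under direct summands (retracts). -/
def ClosedUnderSummands (S : Set B) : Prop :=
  ∀ ⦃X Y : B⦄ (r : X ⟶ Y) (s : Y ⟶ X), s ≫ r = 𝟙 Y → X ∈ S → Y ∈ S

/-- `S` is rigid: `Ext¹(X, Y) = 0` for all `X, Y ∈ S`. -/
def Rigid (S : Set B) : Prop :=
  ∀ ⦃X⦄, X ∈ S → ∀ ⦃Y⦄, Y ∈ S → Ext1Zero X Y

/-- `S^⊥¹`. -/
def rightPerp (S : Set B) : Set B := {Y | ∀ ⦃X⦄, X ∈ S → Ext1Zero X Y}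

/-- `^⊥¹S`. -/
def leftPerp (S : Set B) : Set B := {X | ∀ ⦃Y⦄, Y ∈ S → Ext1Zero X Y}

/-- `f : X ⟶ A` is a right `S`-approximation of `A`. -/
def IsRightApprox (S : Set B) {X A : B} (f : X ⟶ A) : Prop :=
  X ∈ S ∧ ∀ ⦃X' : B⦄, X' ∈ S → ∀ g : X' ⟶ A, ∃ h : X' ⟶ X, h ≫ f = g

def ContravariantlyFinite (S : Set B) : Prop :=
  ∀ A : B, ∃ (X : B) (f : X ⟶ A), IsRightApprox S f

/-- `f : A ⟶ X` is a left `S`-approximation of `A`. -/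
def IsLeftApprox (S : Set B) {A X : B} (f : A ⟶ X) : Prop :=
  X ∈ S ∧ ∀ ⦃X' : B⦄, X' ∈ S → ∀ g : A ⟶ X', ∃ h : X ⟶ X', f ≫ h = g

def CovariantlyFinite (S : Set B) : Prop :=
  ∀ A : B, ∃ (X : B) (f : A ⟶ X), IsLeftApprox S f

/-- `(U, V)` is a cotorsion pair. -/
structure CotorsionPair (U V : Set B) : Prop where
  summands_left : ClosedUnderSummands U
  summands_right : ClosedUnderSummands V
  ext : ∀ ⦃X⦄, X ∈ U → ∀ ⦃Y⦄, Y ∈ V → Ext1Zero X Y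
  resol : ∀ X : B, ∃ (VX UX : B) (i : VX ⟶ UX) (p : UX ⟶ X),
    VX ∈ V ∧ UX ∈ U ∧ IsSES i p
  coresol : ∀ X : B, ∃ (VX UX : B) (i : X ⟶ VX) (p : VX ⟶ UX),
    VX ∈ V ∧ UX ∈ U ∧ IsSES i p

/-- `CoCone(S, T)`. -/
def CoCone (S T : Set B) : Set B :=
  {X | ∃ (B' B'' : B) (i : X ⟶ B') (p : B' ⟶ B''), B' ∈ S ∧ B'' ∈ T ∧ IsSES i p}

/-- `Cone(S, T)`. -/
def Cone (S T : Set B) : Set B :=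
  {X | ∃ (B' B'' : B) (i : B' ⟶ B'') (p : B'' ⟶ X), B' ∈ S ∧ B'' ∈ T ∧ IsSES i p}

/-- The subcategory `𝒫` of projective objects. -/
def projSet : Set B := {P | Projective P}

/-- The subcategory `ℐ` of injective objects. -/
def injSet : Set B := {I | Injective I}

/-- `Ω𝒞`, the (first) syzygy of `𝒞`. -/
def Syz (C : Set B) : Set B := CoCone projSet C

/-- Condition (RCP): `𝒫 ⊆ 𝒞`, `𝒞` rigid, contravariantly finite,
closed under direct summands (and a full additive subcategory). -/
structure RCP (C : Set B) : Prop where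
  add : AddSubcat C
  proj_mem : ∀ ⦃P : B⦄, Projective P → P ∈ C
  rigid : Rigid C
  contra : ContravariantlyFinite C
  summands : ClosedUnderSummands C

/-- `f` factors through an object of `S`. -/
def FactorsThru (S : Set B) {X Y : B} (f : X ⟶ Y) : Prop :=
  ∃ (Z : B) (g : X ⟶ Z) (h : Z ⟶ Y), Z ∈ S ∧ g ≫ h = f

/-- The ideal of morphisms of the full subcategory on `H` factoring through an object of `S`. -/
def idealRel (H S : Set B) : HomRel (ObjectProperty.FullSubcategory (show ObjectProperty B from H)) :=
  fun X Y f g => FactorsThru S (show X.obj ⟶ Y.obj from (f - g).hom)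

/-- The ideal quotient `H/S`. -/
abbrev HeartCat (H S : Set B) := CategoryTheory.Quotient (idealRel H S)

/-- The quotient functor `H → H/S`. -/
abbrev heartQ (H S : Set B) : ObjectProperty.FullSubcategory (show ObjectProperty B from H) ⥤ HeartCat H S :=
  CategoryTheory.Quotient.functor _

/-- The zero morphism in the ideal quotient `H/S`. -/
def heartZero (H S : Set B) (X Y : HeartCat H S) : X ⟶ Y :=
  (heartQ H S).map (0 : X.as ⟶ Y.as)

/-- `κ` is a kernel of `φ` in the ideal quotient `H/S`. -/
structure IsKernelArrow {H S : Set B} {K X Y : HeartCat H S}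
    (κ : K ⟶ X) (φ : X ⟶ Y) : Prop where
  w : κ ≫ φ = heartZero H S K Y
  lift : ∀ ⦃T : HeartCat H S⦄ (t : T ⟶ X), t ≫ φ = heartZero H S T Y →
    ∃! u : T ⟶ K, u ≫ κ = t

/-- `π` is a cokernel of `φ` in the ideal quotient `H/S`. -/
structure IsCokernelArrow {H S : Set B} {X Y Q : HeartCat H S}
    (φ : X ⟶ Y) (π : Y ⟶ Q) : Prop where
  w : φ ≫ π = heartZero H S X Q
  desc : ∀ ⦃T : HeartCat H S⦄ (t : Y ⟶ T), φ ≫ t = heartZero H S X T →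
    ∃! u : Q ⟶ T, π ≫ u = t

/-- The class of epimorphisms in `H/S` whose kernel object lies in `A`. -/
def epiClassWithKernelIn (H S A : Set B) : MorphismProperty (HeartCat H S) :=
  fun X Y φ => Epi φ ∧ ∃ (K : HeartCat H S) (κ : K ⟶ X),
    K.as.obj ∈ A ∧ IsKernelArrow κ φ

/-- The class of monomorphisms in `H/S` whose cokernel object lies in `A`. -/
def monoClassWithCokernelIn (H S A : Set B) : MorphismProperty (HeartCat H S) :=
  fun X Y φ => Mono φ ∧ ∃ (Q : HeartCat H S) (π : Y ⟶ Q),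
    Q.as.obj ∈ A ∧ IsCokernelArrow φ π

/-- The diagram `(⋄)` associated with a morphism `f : Y ⟶ X`. -/
structure DiamondDiagram {Y X : B} (f : Y ⟶ X) {OmX PX Z₁ IY SgY Z₂ : B}
    (q : OmX ⟶ PX) (p : PX ⟶ X) (j : OmX ⟶ Z₁) (g : Z₁ ⟶ Y)
    (i : Y ⟶ IY) (c : IY ⟶ SgY) (h : X ⟶ Z₂) (e : Z₂ ⟶ SgY)
    (u : Z₁ ⟶ PX) (v : IY ⟶ Z₂) : Prop where
  projPX : Projective PX
  injIY : Injective IY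
  ses_proj : IsSES q p
  ses_pullback : IsSES j g
  ses_inj : IsSES i c
  ses_pushout : IsSES h e
  comm₁ : j ≫ u = q
  comm₂ : u ≫ p = g ≫ f
  comm₃ : f ≫ h = i ≫ v
  comm₄ : v ≫ e = c

/-- The class of morphisms `f : Y ⟶ X` admitting a diagram `(⋄)` with
`Z₁ ∈ ZCond` and `h` factoring through an object of `HCond`. -/
def Rclass (ZCond HCond : Set B) : MorphismProperty B :=
  fun Y X f => ∃ (OmX PX Z₁ IY SgY Z₂ : B) (q : OmX ⟶ PX) (p : PX ⟶ X)
    (j : OmX ⟶ Z₁) (g : Z₁ ⟶ Y) (i : Y ⟶ IY) (c : IY ⟶ SgY)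
    (h : X ⟶ Z₂) (e : Z₂ ⟶ SgY) (u : Z₁ ⟶ PX) (v : IY ⟶ Z₂),
    DiamondDiagram f q p j g i c h e u v ∧ Z₁ ∈ ZCond ∧ FactorsThru HCond h

/-- The class of morphisms `f : Y ⟶ X` admitting a diagram `(⋄)` with
`g` factoring through an object of `GCond` and `h` through an object of `HCond`. -/
def RtildeClass (GCond HCond : Set B) : MorphismProperty B :=
  fun Y X f => ∃ (OmX PX Z₁ IY SgY Z₂ : B) (q : OmX ⟶ PX) (p : PX ⟶ X)
    (j : OmX ⟶ Z₁) (g : Z₁ ⟶ Y) (i : Y ⟶ IY) (c : IY ⟶ SgY)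
    (h : X ⟶ Z₂) (e : Z₂ ⟶ SgY) (u : Z₁ ⟶ PX) (v : IY ⟶ Z₂),
    DiamondDiagram f q p j g i c h e u v ∧ FactorsThru GCond g ∧ FactorsThru HCond h

/-- The objects of the heart `ℋ` of a cotorsion pair `(U, V)`. -/
def HeartObjects (U V : Set B) : Set B :=
  {X | (∃ (VX UX : B) (i : VX ⟶ UX) (p : UX ⟶ X),
          IsSES i p ∧ VX ∈ V ∧ UX ∈ U ∩ V) ∧
       (∃ (VX UX : B) (i : X ⟶ VX) (p : VX ⟶ UX),
          IsSES i p ∧ VX ∈ U ∩ V ∧ UX ∈ U)}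



section AuxProofs

variable {B : Type u} [Category.{v} B] [Abelian B]

/-- From a section of `p` in a short exact sequence, obtain a retraction of `i`. -/
lemma retraction_of_section {Y E X : B} {i : Y ⟶ E} {p : E ⟶ X}
    (h : IsSES i p) {s : X ⟶ E} (hs : s ≫ p = 𝟙 X) :
    ∃ r : E ⟶ Y, i ≫ r = 𝟙 Y := by
  obtain ⟨w, hse⟩ := h
  have hmi : Mono i := hse.mono_f
  have hk := hse.fIsKernel
  have hφ : (𝟙 E - p ≫ s) ≫ p = 0 := by
    simp [Preadditive.sub_comp, Category.assoc, hs]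
  obtain ⟨r, hr⟩ := KernelFork.IsLimit.lift' hk _ hφ
  refine ⟨r, ?_⟩
  have : i ≫ r ≫ i = 𝟙 Y ≫ i := by
    rw [show r ≫ i = 𝟙 E - p ≫ s from hr]
    simp [Preadditive.comp_sub, reassoc_of% w]
  exact (cancel_mono i).1 (by simpa using this)

/-- If `Ext¹(D, T) = 0` then any map `U ⟶ T` extends along the inclusion of a
short exact sequence `0 → U → Q → D → 0`. -/
lemma lift_of_ext1Zero {U Q D T : B} {ι : U ⟶ Q} {π : Q ⟶ D}
    (hses : IsSES ι π) (hext : Ext1Zero D T) (f : U ⟶ T) :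
    ∃ w : Q ⟶ T, ι ≫ w = f := by
  obtain ⟨w0, hse⟩ := hses
  have hmι : Mono ι := hse.mono_f
  have heπ : Epi π := hse.epi_g
  have hcok := hse.gIsCokernel
  have hd0 : f ≫ (0 : T ⟶ D) = ι ≫ π := by simp [w0]
  set E := pushout f ι with hE
  set inl : T ⟶ E := pushout.inl f ι with hinl
  set inr : Q ⟶ E := pushout.inr f ι with hinr
  set d : E ⟶ D := pushout.desc 0 π hd0 with hd
  have hcondition : f ≫ inl = ι ≫ inr := pushout.condition
  have winld : inl ≫ d = 0 := pushout.inl_desc _ _ _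
  have hinrd : inr ≫ d = π := pushout.inr_desc _ _ _
  have hmono : Mono inl := CategoryTheory.Abelian.mono_pushout_of_mono_g f ι
  have hepi : Epi d := epi_of_epi_fac hinrd
  -- `d` is a cokernel of `inl`
  have hcolim : IsColimit (CokernelCofork.ofπ d winld) := by
    refine CokernelCofork.IsColimit.ofπ' d winld ?_
    intro T' t ht
    have h1 : ι ≫ (inr ≫ t) = 0 := by
      rw [← Category.assoc, ← hcondition, Category.assoc, ht, comp_zero]
    obtain ⟨s, hs⟩ := CokernelCofork.IsColimit.desc' hcok (inr ≫ t) h1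
    refine ⟨s, ?_⟩
    apply pushout.hom_ext
    · change inl ≫ d ≫ s = inl ≫ t
      rw [← Category.assoc, winld, zero_comp, ht]
    · change inr ≫ d ≫ s = inr ≫ t
      rw [← Category.assoc, hinrd]
      exact hs
  have hsesE : IsSES inl d :=
    ⟨winld, { exact := ShortComplex.exact_of_g_is_cokernel _ hcolim,
              mono_f := hmono, epi_g := hepi }⟩
  obtain ⟨s, hs⟩ := hext inl d hsesE
  obtain ⟨r, hr⟩ := retraction_of_section hsesE hs
  refine ⟨inr ≫ r, ?_⟩
  rw [← Category.assoc, ← hcondition, Category.assoc, hr, comp_id]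

end AuxProofs

/-- the syzygy-approximation diagram for a cotorsion pair `(𝒞, 𝒞^⊥¹)`. -/
theorem statement_2 {B : Type u} [Category.{v} B] [Abelian B]
    [EnoughProjectives B] [EnoughInjectives B]
    (C : Set B) (hcp : CotorsionPair C (rightPerp C)) :
    ∀ X : B, ∃ (Y₀ U₀ P₀ T₀ C₀ : B)
      (g₀ : Y₀ ⟶ U₀) (f₀ : U₀ ⟶ X) (y₀ : Y₀ ⟶ P₀) (m : P₀ ⟶ T₀)
      (u₀ : U₀ ⟶ P₀) (pc : P₀ ⟶ C₀) (x : X ⟶ T₀) (tc : T₀ ⟶ C₀),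
      T₀ ∈ rightPerp C ∧ C₀ ∈ C ∧ Projective P₀ ∧
      IsSES g₀ f₀ ∧ IsSES y₀ m ∧ IsSES u₀ pc ∧ IsSES x tc ∧
      g₀ ≫ u₀ = y₀ ∧ f₀ ≫ x = u₀ ≫ m ∧ m ≫ tc = pc ∧
      IsRightApprox (Syz C) f₀ := by
  intro X
  -- coresolution 0 → X → T₀ → C₀ → 0
  obtain ⟨T₀, C₀, x, tc, hT₀, hC₀, hses_x⟩ := hcp.coresol X
  obtain ⟨wx, hx⟩ := hses_x
  have hmx : Mono x := hx.mono_f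
  have hetc : Epi tc := hx.epi_g
  -- projective covers
  set P : B := Projective.over C₀ with hPdef
  set p : P ⟶ C₀ := Projective.π C₀ with hpdef
  have hPproj : Projective P := inferInstance
  have hpepi : Epi p := inferInstance
  set P' : B := Projective.over X with hP'def
  set e : P' ⟶ X := Projective.π X with hedef
  have hP'proj : Projective P' := inferInstance
  have heepi : Epi e := inferInstance
  set P₀ : B := P ⊞ P' with hP₀def
  have hP₀proj : Projective P₀ := inferInstance
  set pc : P₀ ⟶ C₀ := biprod.desc p 0 with hpcdef
  have hpcepi : Epi pc := epi_of_epi_fac (biprod.inl_desc p 0)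
  -- the map m : P₀ ⟶ T₀
  set m₁ : P ⟶ T₀ := Projective.factorThru p tc with hm₁def
  have hm₁ : m₁ ≫ tc = p := Projective.factorThru_comp p tc
  set m : P₀ ⟶ T₀ := biprod.desc m₁ (e ≫ x) with hmdef
  have hmtc : m ≫ tc = pc := by
    apply biprod.hom_ext' <;> simp [hmdef, hpcdef, hm₁, wx]
  -- m is epi
  have hmepi : Epi m := by
    refine Preadditive.epi_of_cancel_zero m ?_
    intro R t ht
    have hxt : x ≫ t = 0 := by
      have : e ≫ x ≫ t = 0 := by
        have := biprod.inr ≫= ht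
        simpa [hmdef] using this
      exact (cancel_epi e).1 (by simpa using this)
    obtain ⟨t', ht'⟩ := CokernelCofork.IsColimit.desc' hx.gIsCokernel t hxt
    have : pc ≫ t' = 0 := by
      rw [← hmtc, Category.assoc]
      rw [show tc ≫ t' = t from ht', ht]
    have ht'0 : t' = 0 := (cancel_epi pc).1 (by simpa using this)
    rw [← show tc ≫ t' = t from ht', ht'0, comp_zero]
  -- U₀ and u₀
  set U₀ : B := kernel pc with hU₀def
  set u₀ : U₀ ⟶ P₀ := kernel.ι pc with hu₀def
  have hu₀pc : u₀ ≫ pc = 0 := kernel.condition pc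
  have hses_u₀ : IsSES u₀ pc :=
    ⟨hu₀pc, { exact := ShortComplex.exact_of_f_is_kernel _ (kernelIsKernel pc),
              mono_f := inferInstance, epi_g := hpcepi }⟩
  -- f₀ : U₀ ⟶ X
  have hum : (u₀ ≫ m) ≫ tc = 0 := by rw [Category.assoc, hmtc, hu₀pc]
  obtain ⟨f₀, hf₀⟩ := KernelFork.IsLimit.lift' hx.fIsKernel (u₀ ≫ m) hum
  have hf₀x : f₀ ≫ x = u₀ ≫ m := hf₀
  -- f₀ is epi
  have hkP' : (biprod.inr : P' ⟶ P₀) ≫ pc = 0 := by simp [hpcdef]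
  set k : P' ⟶ U₀ := kernel.lift pc biprod.inr hkP' with hkdef
  have hku₀ : k ≫ u₀ = biprod.inr := kernel.lift_ι pc biprod.inr hkP'
  have hkf₀ : k ≫ f₀ = e := by
    apply (cancel_mono x).1
    rw [Category.assoc, hf₀x, ← Category.assoc, hku₀]
    simp [hmdef]
  have hf₀epi : Epi f₀ := epi_of_epi_fac hkf₀
  -- Y₀ and y₀
  set Y₀ : B := kernel m with hY₀def
  set y₀ : Y₀ ⟶ P₀ := kernel.ι m with hy₀def
  have hy₀m : y₀ ≫ m = 0 := kernel.condition m
  have hses_y₀ : IsSES y₀ m :=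
    ⟨hy₀m, { exact := ShortComplex.exact_of_f_is_kernel _ (kernelIsKernel m),
             mono_f := inferInstance, epi_g := hmepi }⟩
  -- g₀ : Y₀ ⟶ U₀
  have hy₀pc : y₀ ≫ pc = 0 := by rw [← hmtc, ← Category.assoc, hy₀m, zero_comp]
  set g₀ : Y₀ ⟶ U₀ := kernel.lift pc y₀ hy₀pc with hg₀def
  have hg₀u₀ : g₀ ≫ u₀ = y₀ := kernel.lift_ι pc y₀ hy₀pc
  have hg₀mono : Mono g₀ := mono_of_mono_fac hg₀u₀
  have hg₀f₀ : g₀ ≫ f₀ = 0 := by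
    apply (cancel_mono x).1
    rw [Category.assoc, hf₀x, ← Category.assoc, hg₀u₀, hy₀m, zero_comp]
  -- g₀ is a kernel of f₀
  have hkerlim : IsLimit (KernelFork.ofι g₀ hg₀f₀) := by
    refine KernelFork.IsLimit.ofι' g₀ hg₀f₀ ?_
    intro A t ht
    have h1 : (t ≫ u₀) ≫ m = 0 := by
      rw [Category.assoc, ← hf₀x, ← Category.assoc, ht, zero_comp]
    refine ⟨kernel.lift m (t ≫ u₀) h1, ?_⟩
    apply (cancel_mono u₀).1
    rw [Category.assoc, hg₀u₀, kernel.lift_ι]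
  have hses_g₀ : IsSES g₀ f₀ :=
    ⟨hg₀f₀, { exact := ShortComplex.exact_of_f_is_kernel _ hkerlim,
              mono_f := hg₀mono, epi_g := hf₀epi }⟩
  -- membership of U₀ in Syz C
  have hU₀Syz : U₀ ∈ Syz C := ⟨P₀, C₀, u₀, pc, hP₀proj, hC₀, hses_u₀⟩
  -- the approximation property
  refine ⟨Y₀, U₀, P₀, T₀, C₀, g₀, f₀, y₀, m, u₀, pc, x, tc,
    hT₀, hC₀, hP₀proj, hses_g₀, hses_y₀, hses_u₀, ⟨wx, hx⟩,
    hg₀u₀, hf₀x, hmtc, hU₀Syz, ?_⟩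
  intro U hU g
  obtain ⟨Q, D, ι, π, hQproj, hD, hsesU⟩ := hU
  -- extend g ≫ x along ι using Ext¹(D, T₀) = 0
  obtain ⟨w, hw⟩ := lift_of_ext1Zero hsesU (hT₀ hD) (g ≫ x)
  -- lift w through the epi m using projectivity of Q
  have : Epi m := hmepi
  have : Projective Q := hQproj
  set w' : Q ⟶ P₀ := Projective.factorThru w m with hw'def
  have hw'm : w' ≫ m = w := Projective.factorThru_comp w m
  have h0 : (ι ≫ w') ≫ pc = 0 := by
    rw [← hmtc, Category.assoc, ← Category.assoc w' m tc, hw'm, reassoc_of% hw, wx,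
      comp_zero]
  refine ⟨kernel.lift pc (ι ≫ w') h0, ?_⟩
  apply (cancel_mono x).1
  rw [Category.assoc, hf₀x, ← Category.assoc, kernel.lift_ι, Category.assoc, hw'm, hw]


end CotorsionPaper
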